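/- For all θ₀, θ_R, θ₀', θ_R' ∈ S_{2π} and every z ∈ ρ(H_{θ₀,θ_R}), the determinant of the 2×2 boundary data map satisfies det_{ℂ²}(Λ_{θ₀,θ_R}^{θ₀',θ_R'}(z)) = Δ(z,R,θ₀',θ_R') / Δ(z,R,θ₀,θ_R). -/

import Mathlib

open MeasureTheory Filter
open scoped InnerProductSpace

noncomputable section
open scoped Classical


variable {H : Type*} [NormedAddCommGroup H] [InnerProductSpace ℂ H] [CompleteSpace H]

/-- `T` is the (bounded, everywhere defined) inverse of `A - z·I`. -/
def IsResolvent (A : H →ₗ.[ℂ] H) (z : ℂ) (T : H →L[ℂ] H) : Prop :=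
  (∀ x : H, ∃ hx : T x ∈ A.domain, A ⟨T x, hx⟩ - z • T x = x) ∧
  ∀ u : A.domain, T (A u - z • (u : H)) = (u : H)

/-- The resolvent set of an unbounded operator. -/
def resolventSetP (A : H →ₗ.[ℂ] H) : Set ℂ := {z | ∃ T, IsResolvent A z T}

/-- The spectrum of an unbounded operator. -/
def specP (A : H →ₗ.[ℂ] H) : Set ℂ := (resolventSetP A)ᶜ

/-- The resolvent `(A - z·I)⁻¹` (junk value `0` off the resolvent set). -/
def res (A : H →ₗ.[ℂ] H) (z : ℂ) : H →L[ℂ] H :=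
  if h : ∃ T, IsResolvent A z T then h.choose else 0

/-- The operator `A + t·I` (same domain). -/
def shiftP (A : H →ₗ.[ℂ] H) (t : ℂ) : H →ₗ.[ℂ] H :=
  ⟨A.domain, A.toFun + t • A.domain.subtype⟩

/-- `A` is of positive type: `(-∞,0] ⊆ ρ(A)` and `sup_{t ≥ 0} ‖(1+t)(A+t)⁻¹‖ < ∞`. -/
def IsPositiveTypeP (A : H →ₗ.[ℂ] H) : Prop :=
  (∀ x : ℝ, x ≤ 0 → (x : ℂ) ∈ resolventSetP A) ∧
  ∃ M : ℝ, ∀ t : ℝ, 0 ≤ t → (1 + t) * ‖res A (-(t : ℂ))‖ ≤ M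

/-- The open sector of half-opening angle `ω` about the positive reals
(`(0,∞)` for `ω = 0`). -/
def sectorS (ω : ℝ) : Set ℂ :=
  if ω = 0 then (fun x : ℝ => (x : ℂ)) '' Set.Ioi 0
  else {z : ℂ | z ≠ 0 ∧ |Complex.arg z| < ω}

/-- `A` is sectorial of angle `ω`. -/
def IsSectorialP (A : H →ₗ.[ℂ] H) (ω : ℝ) : Prop :=
  specP A ⊆ closure (sectorS ω) ∧
  ∀ ω' : ℝ, ω < ω' → ω' < Real.pi →
    ∃ M : ℝ, ∀ z ∈ (closure (sectorS ω'))ᶜ, ‖z‖ * ‖res A z‖ ≤ M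

/-- The shifted sector `-t₀ + S_ω`. -/
def shiftedSector (t0 ω : ℝ) : Set ℂ := (fun w => -(t0 : ℂ) + w) '' sectorS ω

/-- The region `ℂ \ closure (-t₀ + S_ω)`. -/
def offSector (t0 ω : ℝ) : Set ℂ := (closure (shiftedSector t0 ω))ᶜ

/-- The bounded operator `(A - z·I)^{-1/2}`, defined by the Balakrishnan-type formula
`(1/π) ∫₀^∞ t^{-1/2} (A + (t - z)·I)⁻¹ dt`. -/
def negSqrt (A : H →ₗ.[ℂ] H) (z : ℂ) : H →L[ℂ] H :=
  ((Real.pi : ℂ))⁻¹ • ∫ t in Set.Ioi (0 : ℝ), ((Real.sqrt t : ℂ))⁻¹ • res A (z - t)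

/-- Trace-class (nuclear) bounded operators, characterized by
`sup { ∑ |⟨eᵢ, T fᵢ⟩| : (eᵢ), (fᵢ) finite orthonormal families } < ∞`. -/
def IsTraceClass (T : H →L[ℂ] H) : Prop :=
  ∃ C : ℝ, ∀ (n : ℕ) (e f : Fin n → H), Orthonormal ℂ e → Orthonormal ℂ f →
    ∑ i, ‖⟪e i, T (f i)⟫_ℂ‖ ≤ C

/-- The trace norm `‖T‖₁`. -/
def traceNorm (T : H →L[ℂ] H) : ℝ :=
  sSup {s : ℝ | ∃ (n : ℕ) (e f : Fin n → H), Orthonormal ℂ e ∧ Orthonormal ℂ f ∧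
    s = ∑ i, ‖⟪e i, T (f i)⟫_ℂ‖}

/-- The trace of a (trace-class) operator, computed in the Hilbert basis `b`. -/
def traceH (b : HilbertBasis ℕ ℂ H) (T : H →L[ℂ] H) : ℂ :=
  ∑' n, ⟪(b n : H), T (b n)⟫_ℂ

/-- The Fredholm determinant `det (I + T)` (for `T` trace class), computed as the limit of
finite-section determinants along the Hilbert basis `b`. -/
def detI (b : HilbertBasis ℕ ℂ H) (T : H →L[ℂ] H) : ℂ :=
  limUnder atTop fun F : Finset ℕ =>
    Matrix.det (Matrix.of fun i j : F =>
      (if (i : ℕ) = (j : ℕ) then (1 : ℂ) else 0) + ⟪(b (i : ℕ) : H), T (b (j : ℕ))⟫_ℂ)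


/-! ### One-dimensional Schrödinger operators on `[0,R]` -/

/-- The underlying Hilbert space `L²((0,R); dx)`. -/
abbrev SchSp (Rr : ℝ) :=
  MeasureTheory.Lp ℂ 2 (MeasureTheory.volume.restrict (Set.Ioo (0 : ℝ) Rr))

/-- `u` (with derivative `du`) solves `-u'' + V u = z u` on `[0,R]`, with
`u, u' ∈ AC([0,R])` (the second derivative being encoded in integrated form). -/
def SolODE (Rr : ℝ) (V : ℝ → ℂ) (z : ℂ) (u du : ℝ → ℂ) : Prop :=
  (∀ x ∈ Set.Icc (0 : ℝ) Rr, HasDerivWithinAt u (du x) (Set.Icc (0 : ℝ) Rr) x) ∧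
  ∀ x ∈ Set.Icc (0 : ℝ) Rr, du x = du 0 + ∫ t in (0 : ℝ)..x, (V t - z) * u t

/-- The boundary trace `γ_{θ₀,θ_R}(u) = (cos θ₀ u(0) + sin θ₀ u'(0),
cos θ_R u(R) - sin θ_R u'(R))`. -/
def bdryC (Rr : ℝ) (t0 tR : ℂ) (u du : ℝ → ℂ) : Fin 2 → ℂ :=
  ![Complex.cos t0 * u 0 + Complex.sin t0 * du 0,
    Complex.cos tR * u Rr - Complex.sin tR * du Rr]

/-- `g` (with derivative `dg`) is an absolutely continuous representative of `f ∈ L²`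
satisfying `-g'' + V g - z g = h` (in integrated form, with `h₀` a representative of
`h ∈ L²`); i.e. `f` represents `(H - z)⁻¹ h`. -/
def SolvesAt (Rr : ℝ) (V : ℝ → ℂ) (z : ℂ) (f h : SchSp Rr) (g dg : ℝ → ℂ) : Prop :=
  (∀ᵐ x ∂(MeasureTheory.volume.restrict (Set.Ioo (0 : ℝ) Rr)), f x = g x) ∧
  (∀ x ∈ Set.Icc (0 : ℝ) Rr, HasDerivWithinAt g (dg x) (Set.Icc (0 : ℝ) Rr) x) ∧
  ∃ h0 : ℝ → ℂ,
    (∀ᵐ x ∂(MeasureTheory.volume.restrict (Set.Ioo (0 : ℝ) Rr)), h x = h0 x) ∧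
    ∀ x ∈ Set.Icc (0 : ℝ) Rr,
      dg x = dg 0 + ∫ t in (0 : ℝ)..x, (V t * g t - z * g t - h0 t)

/-- `Hop` is the Schrödinger operator `H_{θ₀,θ_R} = -d²/dx² + V` in `L²((0,R); dx)` with
separated boundary conditions `γ_{θ₀,θ_R}(g) = 0`, characterized through its graph. -/
def IsSchrodingerOp (Rr : ℝ) (V : ℝ → ℂ) (t0 tR : ℂ)
    (Hop : SchSp Rr →ₗ.[ℂ] SchSp Rr) : Prop :=
  ∀ f h : SchSp Rr, (f, h) ∈ Hop.graph ↔
    ∃ g dg : ℝ → ℂ, SolvesAt Rr V 0 f h g dg ∧ bdryC Rr t0 tR g dg = 0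

/-- `Λ` is the boundary data map `Λ_{θ₀,θ_R}^{θ₀',θ_R'}(z)`: for every solution `u` of
`-u'' + Vu = zu`, `Λ` maps `γ_{θ₀,θ_R}(u)` to `γ_{θ₀',θ_R'}(u)`. -/
def IsBoundaryDataMap (Rr : ℝ) (V : ℝ → ℂ) (t0 tR t0' tR' : ℂ) (z : ℂ)
    (Λ : Matrix (Fin 2) (Fin 2) ℂ) : Prop :=
  ∀ u du : ℝ → ℂ, SolODE Rr V z u du →
    Λ.mulVec (bdryC Rr t0 tR u du) = bdryC Rr t0' tR' u du

/-- `G` is the map `γ_{θ₀',θ_R'} ∘ (Hop - z)⁻¹ : L²((0,R)) → ℂ²`. -/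
def IsBdryResolventMap (Rr : ℝ) (V : ℝ → ℂ) (t0' tR' : ℂ) (z : ℂ)
    (Hop : SchSp Rr →ₗ.[ℂ] SchSp Rr)
    (G : SchSp Rr →L[ℂ] EuclideanSpace ℂ (Fin 2)) : Prop :=
  ∀ (h : SchSp Rr) (g dg : ℝ → ℂ), SolvesAt Rr V z (res Hop z h) h g dg →
    ∀ i : Fin 2, G h i = bdryC Rr t0' tR' g dg i

/-- The region `ℂ \ [c, ∞)`. -/
def offCut (c : ℝ) : Set ℂ := {z : ℂ | z.im ≠ 0 ∨ z.re < c}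

/-- `N` is the family `z ↦ (Hop - z)^{-1/2}`, defined via the spectral theorem with branch
cut along `[c, ∞)` (`c = inf σ(Hop)`): analytic on `ℂ \ [c,∞)`, squaring to the resolvent,
and positive (self-adjoint) for real `z < c`. -/
def IsSqrtResFam (Rr : ℝ) (Hop : SchSp Rr →ₗ.[ℂ] SchSp Rr) (c : ℝ)
    (N : ℂ → (SchSp Rr →L[ℂ] SchSp Rr)) : Prop :=
  (∀ z ∈ offCut c, (N z).comp (N z) = res Hop z) ∧
  (∀ x : ℝ, x < c →
    (∀ v w : SchSp Rr, ⟪N (x : ℂ) v, w⟫_ℂ = ⟪v, N (x : ℂ) w⟫_ℂ) ∧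
    ∀ v : SchSp Rr, 0 ≤ (⟪v, N (x : ℂ) v⟫_ℂ).re) ∧
  DifferentiableOn ℂ N (offCut c)

/-- The infimum `e₀ = inf(σ(Hop) ∪ σ(Hop'))`. -/
def einf (Rr : ℝ) (Hop Hop' : SchSp Rr →ₗ.[ℂ] SchSp Rr) : ℝ :=
  sInf {x : ℝ | (x : ℂ) ∈ specP Hop ∪ specP Hop'}

/-- The infimum of the spectrum of a single operator. -/
def einf1 (Rr : ℝ) (Hop : SchSp Rr →ₗ.[ℂ] SchSp Rr) : ℝ :=
  sInf {x : ℝ | (x : ℂ) ∈ specP Hop}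


/-- The characteristic determinant `Δ(z,R,θ₀,θ_R)` expressed through the values at `R`
of the fundamental system `θ, φ`. -/
def DeltaW (t0 tR thR dthR phR dphR : ℂ) : ℂ :=
  Complex.cos t0 * Complex.cos tR * phR - Complex.cos t0 * Complex.sin tR * dphR -
    Complex.sin t0 * Complex.cos tR * thR + Complex.sin t0 * Complex.sin tR * dthR



/-! ### Auxiliary lemmas -/

private lemma contOn_of_solODE {Rr : ℝ} {V : ℝ → ℂ} {z : ℂ} {u du : ℝ → ℂ}
    (h : SolODE Rr V z u du) : ContinuousOn u (Set.Icc 0 Rr) :=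
  fun x hx => (h.1 x hx).continuousWithinAt

private lemma intervalInt_aux {Rr : ℝ} {V : ℝ → ℂ}
    (hV : MeasureTheory.IntegrableOn V (Set.Ioo 0 Rr) MeasureTheory.volume)
    (z : ℂ) {u : ℝ → ℂ} (hu : ContinuousOn u (Set.Icc 0 Rr))
    {x : ℝ} (hx : x ∈ Set.Icc (0:ℝ) Rr) :
    IntervalIntegrable (fun t => (V t - z) * u t) MeasureTheory.volume 0 x := by
  rw [intervalIntegrable_iff_integrableOn_Ioc_of_le hx.1]
  have hsub : Set.Ioc (0:ℝ) x ⊆ Set.Icc 0 Rr :=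
    Set.Ioc_subset_Icc_self.trans (Set.Icc_subset_Icc le_rfl hx.2)
  have hVx : MeasureTheory.IntegrableOn V (Set.Ioc 0 x) MeasureTheory.volume := by
    have h1 : MeasureTheory.IntegrableOn V (Set.Ioo 0 x) MeasureTheory.volume :=
      hV.mono_set (Set.Ioo_subset_Ioo le_rfl hx.2)
    rw [MeasureTheory.IntegrableOn, Measure.restrict_congr_set MeasureTheory.Ioo_ae_eq_Ioc] at h1
    exact h1
  obtain ⟨C, hC⟩ := isCompact_Icc.exists_bound_of_continuousOn hu
  have hum : MeasureTheory.AEStronglyMeasurable u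
      (MeasureTheory.volume.restrict (Set.Ioc (0:ℝ) x)) :=
    (hu.mono hsub).aestronglyMeasurable measurableSet_Ioc
  have hmul : MeasureTheory.IntegrableOn (fun t => u t * V t) (Set.Ioc 0 x)
      MeasureTheory.volume :=
    hVx.bdd_mul hum <|
      (MeasureTheory.ae_restrict_iff' measurableSet_Ioc).mpr
        (Filter.Eventually.of_forall fun t ht => hC t (hsub ht))
  have hcont : MeasureTheory.IntegrableOn (fun t => z * u t) (Set.Ioc 0 x)
      MeasureTheory.volume := by
    have hc : ContinuousOn (fun t => z * u t) (Set.Icc 0 Rr) := continuousOn_const.mul hu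
    exact (hc.integrableOn_compact isCompact_Icc).mono_set hsub
  have heq : (fun t => (V t - z) * u t) = fun t => u t * V t - z * u t := by
    funext t; ring
  rw [heq]
  exact hmul.sub hcont

private lemma solODE_lin {Rr : ℝ} {V : ℝ → ℂ}
    (hV : MeasureTheory.IntegrableOn V (Set.Ioo 0 Rr) MeasureTheory.volume) {z : ℂ}
    {u1 du1 u2 du2 : ℝ → ℂ} (h1 : SolODE Rr V z u1 du1) (h2 : SolODE Rr V z u2 du2)
    (α β : ℂ) :
    SolODE Rr V z (fun x => α * u1 x + β * u2 x) (fun x => α * du1 x + β * du2 x) := by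
  refine ⟨fun x hx => ((h1.1 x hx).const_mul α).add ((h2.1 x hx).const_mul β),
    fun x hx => ?_⟩
  have i1 := intervalInt_aux hV z (contOn_of_solODE h1) hx
  have i2 := intervalInt_aux hV z (contOn_of_solODE h2) hx
  have e1 := h1.2 x hx
  have e2 := h2.2 x hx
  have key : (∫ t in (0:ℝ)..x, (V t - z) * (α * u1 t + β * u2 t))
      = α * (∫ t in (0:ℝ)..x, (V t - z) * u1 t)
        + β * ∫ t in (0:ℝ)..x, (V t - z) * u2 t := by
    rw [← intervalIntegral.integral_const_mul, ← intervalIntegral.integral_const_mul,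
      ← intervalIntegral.integral_add (i1.const_mul α) (i2.const_mul β)]
    apply intervalIntegral.integral_congr
    intro t _
    ring
  show α * du1 x + β * du2 x
      = α * du1 0 + β * du2 0 + ∫ t in (0:ℝ)..x, (V t - z) * (α * u1 t + β * u2 t)
  rw [key, e1, e2]
  ring

private lemma vanish_of_ae_zero {Rr : ℝ} (hR : 0 < Rr) {u du : ℝ → ℂ}
    (hd : ∀ x ∈ Set.Icc (0:ℝ) Rr, HasDerivWithinAt u (du x) (Set.Icc 0 Rr) x)
    (hae : ∀ᵐ x ∂(MeasureTheory.volume.restrict (Set.Ioo (0:ℝ) Rr)), u x = 0) :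
    u 0 = 0 ∧ du 0 = 0 := by
  have hu : ContinuousOn u (Set.Icc 0 Rr) := fun x hx => (hd x hx).continuousWithinAt
  have hae' : u =ᵐ[MeasureTheory.volume.restrict (Set.Icc (0:ℝ) Rr)] (fun _ => 0) := by
    rw [← Measure.restrict_congr_set MeasureTheory.Ioo_ae_eq_Icc]
    exact hae
  have hzero : Set.EqOn u (fun _ => (0:ℂ)) (Set.Icc 0 Rr) :=
    MeasureTheory.volume.eqOn_Icc_of_ae_eq hR.ne hae' hu continuousOn_const
  have h00 : u 0 = 0 := hzero ⟨le_rfl, hR.le⟩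
  have h0 : HasDerivWithinAt u (du 0) (Set.Icc 0 Rr) 0 := hd 0 ⟨le_rfl, hR.le⟩
  have h0' : HasDerivWithinAt (fun _ : ℝ => (0:ℂ)) (du 0) (Set.Icc 0 Rr) 0 :=
    h0.congr (fun x hx => (hzero hx).symm) h00.symm
  have hud : UniqueDiffWithinAt ℝ (Set.Icc (0:ℝ) Rr) 0 :=
    uniqueDiffOn_Icc hR 0 ⟨le_rfl, hR.le⟩
  have e1 : derivWithin (fun _ : ℝ => (0:ℂ)) (Set.Icc 0 Rr) 0 = du 0 :=
    h0'.derivWithin hud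
  have e2 : derivWithin (fun _ : ℝ => (0:ℂ)) (Set.Icc (0:ℝ) Rr) 0 = 0 :=
    (hasDerivWithinAt_const 0 _ (0:ℂ)).derivWithin hud
  exact ⟨h00, by rw [← e1, e2]⟩

private lemma sol_trivial {Rr : ℝ} (hR : 0 < Rr) {V : ℝ → ℂ}
    {t0 tR : ℂ} {Hop : SchSp Rr →ₗ.[ℂ] SchSp Rr} (hHop : IsSchrodingerOp Rr V t0 tR Hop)
    {z : ℂ} (hz : z ∈ resolventSetP Hop)
    {u du : ℝ → ℂ} (hu : SolODE Rr V z u du) (hb : bdryC Rr t0 tR u du = 0) :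
    u 0 = 0 ∧ du 0 = 0 := by
  set μ := MeasureTheory.volume.restrict (Set.Ioo (0:ℝ) Rr) with hμ
  have hcont : ContinuousOn u (Set.Icc 0 Rr) := contOn_of_solODE hu
  haveI hfin : MeasureTheory.IsFiniteMeasure μ := by
    constructor
    rw [hμ, Measure.restrict_apply_univ]
    exact measure_Ioo_lt_top
  obtain ⟨C, hC⟩ := isCompact_Icc.exists_bound_of_continuousOn hcont
  have hmeas : MeasureTheory.AEStronglyMeasurable u μ :=
    (hcont.mono Set.Ioo_subset_Icc_self).aestronglyMeasurable measurableSet_Ioo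
  have hmem : MeasureTheory.MemLp u 2 μ :=
    MeasureTheory.MemLp.of_bound hmeas C <|
      (MeasureTheory.ae_restrict_iff' measurableSet_Ioo).mpr
        (Filter.Eventually.of_forall fun t ht => hC t (Set.Ioo_subset_Icc_self ht))
  set f : SchSp Rr := hmem.toLp u with hf
  have hfu : f =ᵐ[μ] u := hmem.coeFn_toLp
  have hgraph : (f, z • f) ∈ Hop.graph := by
    rw [hHop]
    refine ⟨u, du, ⟨hfu, hu.1, fun t => z * u t, ?_, fun x hx => ?_⟩, hb⟩
    · filter_upwards [MeasureTheory.Lp.coeFn_smul z f, hfu] with t h1 h2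
      rw [h1, Pi.smul_apply, h2, smul_eq_mul]
    · have hint := hu.2 x hx
      have heq : Set.EqOn (fun t => V t * u t - 0 * u t - z * u t)
          (fun t => (V t - z) * u t) (Set.uIcc 0 x) := fun t _ => by ring
      rw [intervalIntegral.integral_congr heq]
      exact hint
  obtain ⟨y, hy1, hy2⟩ := Hop.mem_graph_iff.mp hgraph
  obtain ⟨T, hT⟩ := hz
  have hTy := hT.2 y
  rw [hy2, hy1, sub_self, map_zero] at hTy
  have hf0 : f = 0 := hTy.symm
  have hu0 : ∀ᵐ x ∂μ, u x = 0 := by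
    filter_upwards [hfu, MeasureTheory.Lp.coeFn_zero ℂ 2 μ] with t h1 h2
    rw [← h1, hf0, h2]
    rfl
  exact vanish_of_ae_zero hR hu.1 hu0

/-- Lemma 2.8: `det Λ_{θ₀,θ_R}^{θ₀',θ_R'}(z) =
Δ(z,R,θ₀',θ_R') / Δ(z,R,θ₀,θ_R)` for `z ∈ ρ(H_{θ₀,θ_R})`. -/
theorem statement9
    (Rr : ℝ) (hR : 0 < Rr) (V : ℝ → ℂ)
    (hV : MeasureTheory.IntegrableOn V (Set.Ioo 0 Rr) MeasureTheory.volume)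
    (t0 tR t0' tR' : ℂ)
    (ht0 : 0 ≤ t0.re ∧ t0.re < 2 * Real.pi) (htR : 0 ≤ tR.re ∧ tR.re < 2 * Real.pi)
    (ht0' : 0 ≤ t0'.re ∧ t0'.re < 2 * Real.pi) (htR' : 0 ≤ tR'.re ∧ tR'.re < 2 * Real.pi)
    (Hop : SchSp Rr →ₗ.[ℂ] SchSp Rr) (hHop : IsSchrodingerOp Rr V t0 tR Hop)
    (z : ℂ) (hz : z ∈ resolventSetP Hop)
    (Λ : Matrix (Fin 2) (Fin 2) ℂ) (hΛ : IsBoundaryDataMap Rr V t0 tR t0' tR' z Λ)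
    (th dth ph dph : ℝ → ℂ)
    (hth : SolODE Rr V z th dth) (hph : SolODE Rr V z ph dph)
    (hth0 : th 0 = 1) (hdth0 : dth 0 = 0) (hph0 : ph 0 = 0) (hdph0 : dph 0 = 1) :
    Λ.det =
      DeltaW t0' tR' (th Rr) (dth Rr) (ph Rr) (dph Rr) /
        DeltaW t0 tR (th Rr) (dth Rr) (ph Rr) (dph Rr) := by
  have hRmem : Rr ∈ Set.Icc (0:ℝ) Rr := ⟨hR.le, le_rfl⟩
  -- component identities for Λ
  have ea0 : Λ 0 0 * Complex.cos t0
      + Λ 0 1 * (Complex.cos tR * th Rr - Complex.sin tR * dth Rr) = Complex.cos t0' := by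
    have h := congrFun (hΛ th dth hth) 0
    simp only [Matrix.mulVec, dotProduct, Fin.sum_univ_two, bdryC, Matrix.cons_val_zero,
      Matrix.cons_val_one, Matrix.head_cons, hth0, hdth0] at h
    linear_combination h
  have ea1 : Λ 1 0 * Complex.cos t0
      + Λ 1 1 * (Complex.cos tR * th Rr - Complex.sin tR * dth Rr)
      = Complex.cos tR' * th Rr - Complex.sin tR' * dth Rr := by
    have h := congrFun (hΛ th dth hth) 1
    simp only [Matrix.mulVec, dotProduct, Fin.sum_univ_two, bdryC, Matrix.cons_val_zero,
      Matrix.cons_val_one, Matrix.head_cons, hth0, hdth0] at h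
    linear_combination h
  have eb0 : Λ 0 0 * Complex.sin t0
      + Λ 0 1 * (Complex.cos tR * ph Rr - Complex.sin tR * dph Rr) = Complex.sin t0' := by
    have h := congrFun (hΛ ph dph hph) 0
    simp only [Matrix.mulVec, dotProduct, Fin.sum_univ_two, bdryC, Matrix.cons_val_zero,
      Matrix.cons_val_one, Matrix.head_cons, hph0, hdph0] at h
    linear_combination h
  have eb1 : Λ 1 0 * Complex.sin t0
      + Λ 1 1 * (Complex.cos tR * ph Rr - Complex.sin tR * dph Rr)
      = Complex.cos tR' * ph Rr - Complex.sin tR' * dph Rr := by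
    have h := congrFun (hΛ ph dph hph) 1
    simp only [Matrix.mulVec, dotProduct, Fin.sum_univ_two, bdryC, Matrix.cons_val_zero,
      Matrix.cons_val_one, Matrix.head_cons, hph0, hdph0] at h
    linear_combination h
  -- nonvanishing of the denominator
  have hD : DeltaW t0 tR (th Rr) (dth Rr) (ph Rr) (dph Rr) ≠ 0 := by
    intro h0
    simp only [DeltaW] at h0
    set M : Matrix (Fin 2) (Fin 2) ℂ :=
      !![Complex.cos t0, Complex.sin t0;
        Complex.cos tR * th Rr - Complex.sin tR * dth Rr,
        Complex.cos tR * ph Rr - Complex.sin tR * dph Rr] with hM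
    have hdet : M.det = 0 := by
      rw [hM, Matrix.det_fin_two_of]
      linear_combination h0
    obtain ⟨v, hv, hMv⟩ := Matrix.exists_mulVec_eq_zero_iff.mpr hdet
    have hsol := solODE_lin hV hth hph (v 0) (v 1)
    have hbd : bdryC Rr t0 tR (fun x => v 0 * th x + v 1 * ph x)
        (fun x => v 0 * dth x + v 1 * dph x) = 0 := by
      funext i
      have hvi := congrFun hMv i
      fin_cases i <;>
      · simp only [hM, Matrix.mulVec, dotProduct, Fin.sum_univ_two, Fin.mk_zero,
          Fin.mk_one, Fin.isValue, Matrix.cons_val_zero, Matrix.cons_val_one,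
          Matrix.head_cons, Matrix.vecHead, Matrix.of_apply, Matrix.cons_val', Matrix.empty_val',
          Matrix.cons_val_fin_one, Pi.zero_apply, bdryC,
          hth0, hdth0, hph0, hdph0] at hvi ⊢
        linear_combination hvi
    obtain ⟨h1, h2⟩ := sol_trivial hR hHop hz hsol hbd
    apply hv
    funext i
    fin_cases i
    · simpa [hth0, hph0] using h1
    · simpa [hdth0, hdph0] using h2
  rw [eq_div_iff hD]
  have hD' : DeltaW t0' tR' (th Rr) (dth Rr) (ph Rr) (dph Rr)
      = Complex.cos t0' * (Complex.cos tR' * ph Rr - Complex.sin tR' * dph Rr)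
        - Complex.sin t0' * (Complex.cos tR' * th Rr - Complex.sin tR' * dth Rr) := by
    simp only [DeltaW]; ring
  rw [hD', ← ea0, ← ea1, ← eb0, ← eb1, Matrix.det_fin_two]
  simp only [DeltaW]
  ring

end
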